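/- Let R be a ring, M a virtually semisimple left R-module, and W a submodule of M with the property that every submodule K of M that embeds R-linearly into W is contained in W. Then W is a virtually semisimple R-module, and there is a direct summand K of M such that K ≅ W and K is a direct summand of W (i.e., K ⊕ K' = W for some submodule K' of W). In particular, if W is Dedekind finite, then W is itself a direct summand of M. -/

import Mathlib

universe u v w

/-- A left `R`-module `M` is *virtually semisimple* if every submodule of `M` is
isomorphic, as an `R`-module, to a direct summand of `M`. -/
def IsVirtuallySemisimple (R : Type u) [Ring R] (M : Type v) [AddCommGroup M] [Module R M] :
    Prop :=
  ∀ N : Submodule R M, ∃ K : Submodule R M, (∃ K' : Submodule R M, IsCompl K K') ∧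
    Nonempty (N ≃ₗ[R] K)

/-- A module is *completely virtually semisimple* if every submodule is virtually semisimple. -/
def IsCompletelyVirtuallySemisimple (R : Type u) [Ring R] (M : Type v) [AddCommGroup M]
    [Module R M] : Prop :=
  ∀ N : Submodule R M, IsVirtuallySemisimple R N


/-- A module `W` is *Dedekind finite* if `W ≅ W ⊕ N` implies `N = 0`. -/
def IsDedekindFiniteModule (R : Type u) [Ring R] (W : Type v) [AddCommGroup W] [Module R W] :
    Prop :=
  ∀ (N : Type v) [AddCommGroup N] [Module R N], Nonempty (W ≃ₗ[R] W × N) → Subsingleton N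


private lemma aux_compl {R : Type u} [Ring R] {M : Type v} [AddCommGroup M] [Module R M]
    {W p q : Submodule R M} (hp : p ≤ W) (hq : q ≤ W) (hinf : p ⊓ q = ⊥) (hsup : p ⊔ q = W) :
    IsCompl (p.comap W.subtype) (q.comap W.subtype) := by
  have hi := Submodule.map_injective_of_injective (f := W.subtype) W.injective_subtype
  constructor
  · rw [disjoint_iff]
    apply hi
    rw [Submodule.map_inf _ W.injective_subtype, Submodule.map_comap_subtype,
      Submodule.map_comap_subtype, Submodule.map_bot, inf_of_le_right hp, inf_of_le_right hq, hinf]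
  · rw [codisjoint_iff]
    apply hi
    rw [Submodule.map_sup, Submodule.map_comap_subtype, Submodule.map_comap_subtype,
      inf_of_le_right hp, inf_of_le_right hq, hsup, Submodule.map_top, Submodule.range_subtype]

/-- Let `M` be virtually semisimple and `W` a submodule containing every submodule `K` of `M`
that embeds into `W`.  Then `W` is virtually semisimple, and there is a direct summand `K` of
`M` with `K ≅ W` and `K ⊕ K' = W` for some submodule `K'`.  In particular, if `W` is Dedekind
finite then `W` is a direct summand of `M`. -/
theorem stmt_3 (R : Type u) [Ring R] (M : Type v) [AddCommGroup M] [Module R M]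
    (hM : IsVirtuallySemisimple R M) (W : Submodule R M)
    (hW : ∀ K : Submodule R M, (∃ f : K →ₗ[R] W, Function.Injective f) → K ≤ W) :
    IsVirtuallySemisimple R W ∧
    (∃ K : Submodule R M, (∃ K'' : Submodule R M, IsCompl K K'') ∧ Nonempty (K ≃ₗ[R] W) ∧
      ∃ K' : Submodule R M, K' ≤ W ∧ K ⊓ K' = ⊥ ∧ K ⊔ K' = W) ∧
    (IsDedekindFiniteModule R W → ∃ W' : Submodule R M, IsCompl W W') := by

  -- Key construction: any `N ≤ W` is isomorphic to a direct summand `K` of `M` with `K ≤ W`.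
  have key : ∀ N : Submodule R M, N ≤ W → ∃ K : Submodule R M,
      (∃ K'' : Submodule R M, IsCompl K K'') ∧ Nonempty (K ≃ₗ[R] N) ∧ K ≤ W := by
    intro N hN
    obtain ⟨K, hKc, ⟨e⟩⟩ := hM N
    refine ⟨K, hKc, ⟨e.symm⟩, hW K ⟨(Submodule.inclusion hN).comp e.symm.toLinearMap, ?_⟩⟩
    exact (Submodule.inclusion_injective hN).comp e.symm.injective
  -- The second conjunct's data
  obtain ⟨K, ⟨K'', hKc⟩, ⟨e⟩, hKW⟩ := key W le_rfl
  have hdisj : K ⊓ (K'' ⊓ W) = ⊥ := by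
    rw [eq_bot_iff]
    calc K ⊓ (K'' ⊓ W) ≤ K ⊓ K'' := inf_le_inf_left _ inf_le_left
    _ = ⊥ := hKc.disjoint.eq_bot
  have hsup : K ⊔ (K'' ⊓ W) = W := by
    rw [← sup_inf_assoc_of_le _ hKW, hKc.sup_eq_top, top_inf_eq]
  have part2 : ∃ K : Submodule R M, (∃ K'' : Submodule R M, IsCompl K K'') ∧
      Nonempty (K ≃ₗ[R] W) ∧ ∃ K' : Submodule R M, K' ≤ W ∧ K ⊓ K' = ⊥ ∧ K ⊔ K' = W :=
    ⟨K, ⟨K'', hKc⟩, ⟨e⟩, K'' ⊓ W, inf_le_right, hdisj, hsup⟩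
  refine ⟨?_, part2, ?_⟩
  · -- W is virtually semisimple
    intro N
    obtain ⟨L, ⟨L'', hLc⟩, ⟨f⟩, hLW⟩ := key (N.map W.subtype) (Submodule.map_subtype_le W N)
    have hdisjL : L ⊓ (L'' ⊓ W) = ⊥ := by
      rw [eq_bot_iff]
      calc L ⊓ (L'' ⊓ W) ≤ L ⊓ L'' := inf_le_inf_left _ inf_le_left
      _ = ⊥ := hLc.disjoint.eq_bot
    have hsupL : L ⊔ (L'' ⊓ W) = W := by
      rw [← sup_inf_assoc_of_le _ hLW, hLc.sup_eq_top, top_inf_eq]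
    refine ⟨L.comap W.subtype, ⟨(L'' ⊓ W).comap W.subtype,
      aux_compl hLW inf_le_right hdisjL hsupL⟩, ⟨?_⟩⟩
    exact ((Submodule.equivMapOfInjective W.subtype W.injective_subtype N).trans f.symm).trans
      (Submodule.comapSubtypeEquivOfLe hLW).symm
  · -- Dedekind finite case
    intro hDF
    have hcompl := aux_compl hKW (inf_le_right : K'' ⊓ W ≤ W) hdisj hsup
    have eW : ↥W ≃ₗ[R] ↥W × ↥(K'' ⊓ W) :=
      (Submodule.prodEquivOfIsCompl _ _ hcompl).symm.trans
        (LinearEquiv.prodCongr ((Submodule.comapSubtypeEquivOfLe hKW).trans e)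
          (Submodule.comapSubtypeEquivOfLe (inf_le_right : K'' ⊓ W ≤ W)))
    have hsub : Subsingleton ↥(K'' ⊓ W) := hDF _ ⟨eW⟩
    have hbot : K'' ⊓ W = ⊥ := Submodule.eq_bot_of_subsingleton
    have hKeq : K = W := by rw [← hsup, hbot, sup_bot_eq]
    exact ⟨K'', hKeq ▸ hKc⟩
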